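/- arXiv:1501.07654 — 4 statements merged into one kernel-verified Lean document; each statement's English description precedes it below -/
import Mathlib

section
/- Let V be a finite-dimensional real vector space, B a symmetric bilinear form on V of signature (1, dim V − 1), B_ℂ its complex-bilinear extension to the complexification V_ℂ = ℂ ⊗ V, and z ↦ z̄ the natural conjugation on V_ℂ. If ω ∈ V satisfies B(ω,ω) > 0, then for every z ∈ V_ℂ the product B_ℂ(z,ω)·B_ℂ(z̄,ω) is real and satisfies B_ℂ(z,ω)·B_ℂ(z̄,ω) ≥ B_ℂ(z, z̄)·B(ω,ω), with equality if and only if z is a complex scalar multiple of ω. -/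
open TensorProduct ComplexOrder

/-- The natural conjugation `z ⊗ v ↦ z̄ ⊗ v` on the complexification `ℂ ⊗[ℝ] V`. -/
noncomputable def conjVc (V : Type*) [AddCommGroup V] [Module ℝ V] :
    ℂ ⊗[ℝ] V →ₗ[ℝ] ℂ ⊗[ℝ] V :=
  TensorProduct.map Complex.conjAe.toLinearMap LinearMap.id

section aux

variable {V : Type*} [AddCommGroup V] [Module ℝ V] [FiniteDimensional ℝ V]

private lemma aux_neg (B : LinearMap.BilinForm ℝ V) (hsymm : ∀ x y, B x y = B y x)
    (hsig : ∃ (e : V) (W : Submodule ℝ V), IsCompl (Submodule.span ℝ {e}) W ∧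
      0 < B e e ∧ (∀ w ∈ W, B e w = 0) ∧ (∀ w ∈ W, w ≠ 0 → B w w < 0))
    (ω : V) (hω : 0 < B ω ω) (u : V) (hu : B u ω = 0) (hune : u ≠ 0) : B u u < 0 := by
  by_contra hge
  push_neg at hge
  obtain ⟨e, W, hcompl, he, heW, hW⟩ := hsig
  have hωne : ω ≠ 0 := fun h => by simp [h] at hω
  have hene : e ≠ 0 := fun h => by simp [h] at he
  have hli : LinearIndependent ℝ ![ω, u] := by
    rw [LinearIndependent.pair_iff]
    intro s t hst
    have h1 : s * B ω ω + t * B u ω = 0 := by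
      have := congrArg (fun v => B v ω) hst
      simpa [map_add, map_smul] using this
    rw [hu, mul_zero, add_zero, mul_eq_zero] at h1
    have hs : s = 0 := h1.resolve_right (ne_of_gt hω)
    subst hs
    rw [zero_smul, zero_add, smul_eq_zero] at hst
    exact ⟨rfl, hst.resolve_right hune⟩
  set P := Submodule.span ℝ {ω, u} with hP
  have hPrank : Module.finrank ℝ P = 2 := by
    have := finrank_span_eq_card hli
    have hr : Set.range ![ω, u] = {ω, u} := by
      ext v; simp [Matrix.range_cons, Matrix.range_empty]; tauto
    rw [hr] at this
    simpa using this
  have hWrank : Module.finrank ℝ (Submodule.span ℝ {e}) + Module.finrank ℝ W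
      = Module.finrank ℝ V := Submodule.finrank_add_eq_of_isCompl hcompl
  rw [finrank_span_singleton hene] at hWrank
  have hnd : ¬ Disjoint P W := by
    intro hd
    have := Submodule.finrank_add_finrank_le_of_disjoint hd
    omega
  rw [Submodule.disjoint_def] at hnd
  push_neg at hnd
  obtain ⟨p, hpP, hpW, hpne⟩ := hnd
  have hneg : B p p < 0 := hW p hpW hpne
  obtain ⟨a, b, hab⟩ := Submodule.mem_span_pair.mp hpP
  have : B p p = a^2 * B ω ω + b^2 * B u u := by
    rw [← hab]
    have hωu : B ω u = 0 := by rw [hsymm ω u, hu]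
    simp [map_add, map_smul, hu, hωu]
    ring
  nlinarith

private lemma aux_cs (B : LinearMap.BilinForm ℝ V) (hsymm : ∀ x y, B x y = B y x)
    (hsig : ∃ (e : V) (W : Submodule ℝ V), IsCompl (Submodule.span ℝ {e}) W ∧
      0 < B e e ∧ (∀ w ∈ W, B e w = 0) ∧ (∀ w ∈ W, w ≠ 0 → B w w < 0))
    (ω : V) (hω : 0 < B ω ω) (v : V) :
    B v v * B ω ω ≤ B v ω ^ 2 ∧ (B v ω ^ 2 = B v v * B ω ω ↔ ∃ s : ℝ, v = s • ω) := by
  set s₀ : ℝ := B v ω / B ω ω with hs₀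
  set u : V := v - s₀ • ω with hudef
  have huω : B u ω = 0 := by
    simp only [hudef, map_sub, map_smul, LinearMap.sub_apply, LinearMap.smul_apply,
      smul_eq_mul, hs₀]
    field_simp
    ring
  have huu : B u u = B v v - B v ω ^ 2 / B ω ω := by
    have hωv : B ω v = B v ω := hsymm ω v
    simp only [hudef, map_sub, map_smul, LinearMap.sub_apply, LinearMap.smul_apply,
      smul_eq_mul, hs₀, hωv]
    field_simp
    ring
  by_cases hu0 : u = 0
  · have hv : v = s₀ • ω := by
      have := hu0
      rw [hudef, sub_eq_zero] at this
      exact this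
    constructor
    · rw [hv]
      simp only [map_smul, LinearMap.smul_apply, smul_eq_mul, LinearMap.map_smul₂]
      nlinarith [sq_nonneg s₀]
    · constructor
      · intro _; exact ⟨s₀, hv⟩
      · intro _
        rw [hv]
        simp only [map_smul, LinearMap.smul_apply, smul_eq_mul, LinearMap.map_smul₂]
        ring
  · have hneg : B u u < 0 := aux_neg B hsymm hsig ω hω u huω hu0
    rw [huu] at hneg
    have hlt : B v v * B ω ω < B v ω ^ 2 := by
      have := mul_lt_mul_of_pos_right hneg hω
      rw [sub_mul, div_mul_cancel₀ _ (ne_of_gt hω)] at this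
      linarith
    refine ⟨le_of_lt hlt, ?_, ?_⟩
    · intro h; exact absurd h.symm (ne_of_lt hlt)
    · rintro ⟨s, rfl⟩
      exfalso
      apply hu0
      have : B (s • ω) ω = s * B ω ω := by
        simp [LinearMap.map_smul₂]
      rw [hudef, hs₀, this, mul_div_cancel_right₀ _ (ne_of_gt hω), sub_self]

private lemma aux_smul (ω : V) (s t : ℝ) :
    ((s : ℂ) + (t : ℂ) * Complex.I) • ((1 : ℂ) ⊗ₜ[ℝ] ω)
      = (1 : ℂ) ⊗ₜ[ℝ] (s • ω) + Complex.I ⊗ₜ[ℝ] (t • ω) := by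
  rw [smul_tmul', tmul_smul, tmul_smul, smul_tmul', smul_tmul', ← add_tmul]
  congr 1
  simp [Complex.real_smul]

private lemma aux_decomp (z : ℂ ⊗[ℝ] V) :
    ∃ x y : V, z = (1 : ℂ) ⊗ₜ[ℝ] x + Complex.I ⊗ₜ[ℝ] y := by
  induction z with
  | zero => exact ⟨0, 0, by simp⟩
  | tmul c v =>
    refine ⟨c.re • v, c.im • v, ?_⟩
    rw [tmul_smul, tmul_smul, smul_tmul', smul_tmul', ← add_tmul]
    congr 1
    simp [Complex.real_smul]
  | add z₁ z₂ h₁ h₂ =>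
    obtain ⟨x₁, y₁, rfl⟩ := h₁
    obtain ⟨x₂, y₂, rfl⟩ := h₂
    exact ⟨x₁ + x₂, y₁ + y₂, by rw [tmul_add, tmul_add]; abel⟩

end aux

/-- Let `V` be a finite-dimensional real vector space, `B` a symmetric bilinear
form on `V` of signature `(1, dim V − 1)`, `B_ℂ = B.baseChange ℂ` its complex-bilinear extension
to the complexification `ℂ ⊗[ℝ] V`, and `conjVc V` the natural conjugation.  If `ω ∈ V` satisfies
`B ω ω > 0`, then for every `z` in the complexification the product `B_ℂ(z,ω) * B_ℂ(z̄,ω)` is real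
and satisfies `B_ℂ(z,ω) * B_ℂ(z̄,ω) ≥ B_ℂ(z,z̄) * B(ω,ω)`, with equality iff `z` is a complex
scalar multiple of `ω`. -/
theorem stmt2 {V : Type*} [AddCommGroup V] [Module ℝ V] [FiniteDimensional ℝ V]
    (B : LinearMap.BilinForm ℝ V) (hsymm : ∀ x y, B x y = B y x)
    (hsig : ∃ (e : V) (W : Submodule ℝ V), IsCompl (Submodule.span ℝ {e}) W ∧
      0 < B e e ∧ (∀ w ∈ W, B e w = 0) ∧ (∀ w ∈ W, w ≠ 0 → B w w < 0))
    (ω : V) (hω : 0 < B ω ω) (z : ℂ ⊗[ℝ] V) :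
    ((B.baseChange ℂ) z ((1 : ℂ) ⊗ₜ[ℝ] ω) * (B.baseChange ℂ) (conjVc V z) ((1 : ℂ) ⊗ₜ[ℝ] ω)).im
      = 0 ∧
    (B.baseChange ℂ) z (conjVc V z) * (B ω ω : ℂ) ≤
      (B.baseChange ℂ) z ((1 : ℂ) ⊗ₜ[ℝ] ω) * (B.baseChange ℂ) (conjVc V z) ((1 : ℂ) ⊗ₜ[ℝ] ω) ∧
    ((B.baseChange ℂ) z ((1 : ℂ) ⊗ₜ[ℝ] ω) * (B.baseChange ℂ) (conjVc V z) ((1 : ℂ) ⊗ₜ[ℝ] ω)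
        = (B.baseChange ℂ) z (conjVc V z) * (B ω ω : ℂ) ↔
      ∃ c : ℂ, z = c • ((1 : ℂ) ⊗ₜ[ℝ] ω)) := by
  obtain ⟨x, y, hz⟩ := aux_decomp z
  have hconj : conjVc V z = (1 : ℂ) ⊗ₜ[ℝ] x + (-Complex.I) ⊗ₜ[ℝ] y := by
    rw [hz]
    simp [conjVc, TensorProduct.map_tmul, Complex.conj_I]
  -- the three complex quantities as real numbers
  have hA : (B.baseChange ℂ) z ((1 : ℂ) ⊗ₜ[ℝ] ω) = (B x ω : ℂ) + (B y ω : ℂ) * Complex.I := by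
    rw [hz]
    simp [LinearMap.BilinForm.baseChange_tmul, Complex.real_smul]
  have hAbar : (B.baseChange ℂ) (conjVc V z) ((1 : ℂ) ⊗ₜ[ℝ] ω)
      = (B x ω : ℂ) - (B y ω : ℂ) * Complex.I := by
    rw [hconj]
    simp [LinearMap.BilinForm.baseChange_tmul, Complex.real_smul]
    ring
  have hC : (B.baseChange ℂ) z (conjVc V z) = ((B x x + B y y : ℝ) : ℂ) := by
    rw [hconj, hz]
    simp only [map_add, LinearMap.add_apply, LinearMap.BilinForm.baseChange_tmul,
      Complex.real_smul, hsymm y x]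
    push_cast
    have hI : Complex.I * Complex.I = -1 := Complex.I_mul_I
    ring_nf
    rw [Complex.I_sq]
    ring
  have hprod : (B.baseChange ℂ) z ((1 : ℂ) ⊗ₜ[ℝ] ω)
      * (B.baseChange ℂ) (conjVc V z) ((1 : ℂ) ⊗ₜ[ℝ] ω)
      = ((B x ω ^ 2 + B y ω ^ 2 : ℝ) : ℂ) := by
    rw [hA, hAbar]
    push_cast
    ring_nf
    rw [Complex.I_sq]
    ring
  have hRHS : (B.baseChange ℂ) z (conjVc V z) * (B ω ω : ℂ)
      = (((B x x + B y y) * B ω ω : ℝ) : ℂ) := by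
    rw [hC]; push_cast; ring
  obtain ⟨hx1, hx2⟩ := aux_cs B hsymm hsig ω hω x
  obtain ⟨hy1, hy2⟩ := aux_cs B hsymm hsig ω hω y
  refine ⟨?_, ?_, ?_, ?_⟩
  · rw [hprod]; exact Complex.ofReal_im _
  · rw [hprod, hRHS]
    rw [Complex.real_le_real]
    nlinarith
  · -- equality → scalar multiple
    intro heq
    rw [hprod, hRHS] at heq
    have heqr : B x ω ^ 2 + B y ω ^ 2 = (B x x + B y y) * B ω ω := by
      exact_mod_cast heq
    have hxe : B x ω ^ 2 = B x x * B ω ω := by nlinarith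
    have hye : B y ω ^ 2 = B y y * B ω ω := by nlinarith
    obtain ⟨s, hs⟩ := hx2.mp hxe
    obtain ⟨t, ht⟩ := hy2.mp hye
    exact ⟨(s : ℂ) + (t : ℂ) * Complex.I, by rw [hz, hs, ht, aux_smul]⟩
  · -- scalar multiple → equality
    rintro ⟨c, hc⟩
    clear hA hAbar hC hprod hRHS hx1 hx2 hy1 hy2 hconj
    have hcz : c • ((1 : ℂ) ⊗ₜ[ℝ] ω) = c ⊗ₜ[ℝ] ω := by
      rw [smul_tmul', smul_eq_mul, mul_one]
    have hconj' : conjVc V (c • ((1 : ℂ) ⊗ₜ[ℝ] ω)) = (starRingEnd ℂ c) ⊗ₜ[ℝ] ω := by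
      rw [hcz]; simp [conjVc, TensorProduct.map_tmul]
    rw [hc, hconj', hcz]
    simp only [LinearMap.BilinForm.baseChange_tmul, Complex.real_smul]
    ring
end

section
/- Let V be a finite-dimensional complex vector space and h a Hermitian sesquilinear form on V of signature (1, dim V − 1). If ω ∈ V satisfies h(ω,ω) > 0, then for every α ∈ V one has h(α,ω)·h(ω,α) ≥ h(α,α)·h(ω,ω) (here h(α,ω)·h(ω,α) = |h(α,ω)|² and h(α,α), h(ω,ω) are real), and equality holds if and only if α is a complex scalar multiple of ω. -/
open ComplexOrder

/-- A complex number fixed by conjugation and not negative is nonnegative. -/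
private lemma real_not_neg_nonneg {z : ℂ} (hz : starRingEnd ℂ z = z) (h : ¬ z < 0) : 0 ≤ z := by
  have him : z.im = 0 := by
    clear h
    have h2 := congrArg Complex.im hz
    simp only [Complex.conj_im] at h2
    linarith
  rw [Complex.le_def]
  refine ⟨?_, by simp [him]⟩
  by_contra hre
  exact h (Complex.lt_def.mpr ⟨by simpa using lt_of_not_ge hre, by simp [him]⟩)

/-- Key lemma: on the `h`-orthogonal complement of a positive vector, a vector with
nonnegative self-pairing must vanish. -/
private lemma key {V : Type*} [AddCommGroup V] [Module ℂ V]
    (h : V →ₗ[ℂ] V →ₛₗ[starRingEnd ℂ] ℂ)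
    (hherm : ∀ x y, starRingEnd ℂ (h x y) = h y x)
    (hsig : ∃ (e : V) (W : Submodule ℂ V), IsCompl (Submodule.span ℂ {e}) W ∧
      0 < h e e ∧ (∀ w ∈ W, h e w = 0) ∧ (∀ w ∈ W, w ≠ 0 → h w w < 0))
    (ω : V) (hω : 0 < h ω ω) (β : V) (hββ : 0 ≤ h β β) (hβω : h β ω = 0) : β = 0 := by
  obtain ⟨e, W, hcompl, _he, _heW, hWneg⟩ := hsig
  have hωβ : h ω β = 0 := by rw [← hherm β ω, hβω, map_zero]
  have hωω_ne : h ω ω ≠ 0 := ne_of_gt hω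
  have hω_ne : ω ≠ 0 := by
    rintro rfl; simp at hω
  -- decompose β and ω along span{e} ⊕ W
  have hdecomp : ∀ v : V, ∃ (lam : ℂ) (w : V), w ∈ W ∧ v = lam • e + w := by
    intro v
    have hv : v ∈ Submodule.span ℂ {e} ⊔ W := by
      rw [hcompl.sup_eq_top]; trivial
    obtain ⟨s, hs, w, hw, hsw⟩ := Submodule.mem_sup.mp hv
    obtain ⟨lam, rfl⟩ := Submodule.mem_span_singleton.mp hs
    exact ⟨lam, w, hw, hsw.symm⟩
  obtain ⟨lam, w₁, hw₁, hβeq⟩ := hdecomp β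
  obtain ⟨mu, w₂, hw₂, hωeq⟩ := hdecomp ω
  -- the vector μ•β − λ•ω lies in W
  set w : V := mu • β - lam • ω with hw_def
  have hwW : w ∈ W := by
    have : w = mu • w₁ - lam • w₂ := by
      rw [hw_def, hβeq, hωeq]; module
    rw [this]
    exact Submodule.sub_mem W (Submodule.smul_mem W _ hw₁) (Submodule.smul_mem W _ hw₂)
  -- its self-pairing is nonnegative
  have hww : 0 ≤ h w w := by
    have hexp : h w w = (mu * starRingEnd ℂ mu) * h β β
        + (lam * starRingEnd ℂ lam) * h ω ω := by
      simp only [hw_def, map_sub, map_smul, LinearMap.sub_apply, LinearMap.smul_apply,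
        map_smulₛₗ, smul_eq_mul, hβω, hωβ]
      ring
    rw [hexp]
    have h1 : (0:ℂ) ≤ mu * starRingEnd ℂ mu := by
      rw [Complex.mul_conj]
      simpa using Complex.normSq_nonneg mu
    have h2 : (0:ℂ) ≤ lam * starRingEnd ℂ lam := by
      rw [Complex.mul_conj]
      simpa using Complex.normSq_nonneg lam
    exact add_nonneg (mul_nonneg h1 hββ) (mul_nonneg h2 (le_of_lt hω))
  -- hence it must be zero
  have hw0 : w = 0 := by
    by_contra hne
    exact absurd hww (not_le_of_gt (hWneg w hwW hne))
  -- so μ•β = λ•ω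
  have hmb : mu • β = lam • ω := by
    have := sub_eq_zero.mp (hw_def ▸ hw0)
    exact this
  by_cases hmu : mu = 0
  · -- then ω ∈ W, contradicting positivity
    exfalso
    have : ω = w₂ := by rw [hωeq, hmu]; simp
    exact absurd hω (not_lt_of_gt (hWneg ω (this ▸ hw₂) hω_ne))
  · -- β is a multiple of ω, and orthogonality forces β = 0
    have hβmul : β = (mu⁻¹ * lam) • ω := by
      have := congrArg (fun v => mu⁻¹ • v) hmb
      simpa [smul_smul, inv_mul_cancel₀ hmu] using this
    have : (mu⁻¹ * lam) * h ω ω = 0 := by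
      rw [← hβω, hβmul]
      simp only [map_smul, LinearMap.smul_apply, smul_eq_mul]
    have hc : mu⁻¹ * lam = 0 := by
      rcases mul_eq_zero.mp this with hc | hc
      · exact hc
      · exact absurd hc hωω_ne
    rw [hβmul, hc, zero_smul]

/-- Let `V` be a finite-dimensional complex vector space and `h` a Hermitian
sesquilinear form on `V` of signature `(1, dim V − 1)`, i.e. `V` admits an `h`-orthogonal direct
sum decomposition `V = ℂe ⊕ W` with `h e e > 0` and `h` negative definite on `W`.  If `ω ∈ V`
satisfies `h ω ω > 0`, then for every `α ∈ V` one has `h α ω * h ω α ≥ h α α * h ω ω`, with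
equality iff `α` is a complex scalar multiple of `ω`. -/
theorem stmt3 {V : Type*} [AddCommGroup V] [Module ℂ V] [FiniteDimensional ℂ V]
    (h : V →ₗ[ℂ] V →ₛₗ[starRingEnd ℂ] ℂ)
    (hherm : ∀ x y, starRingEnd ℂ (h x y) = h y x)
    (hsig : ∃ (e : V) (W : Submodule ℂ V), IsCompl (Submodule.span ℂ {e}) W ∧
      0 < h e e ∧ (∀ w ∈ W, h e w = 0) ∧ (∀ w ∈ W, w ≠ 0 → h w w < 0))
    (ω : V) (hω : 0 < h ω ω) (α : V) :
    h α α * h ω ω ≤ h α ω * h ω α ∧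
    (h α ω * h ω α = h α α * h ω ω ↔ ∃ c : ℂ, α = c • ω) := by
  set a : ℂ := h ω ω with ha_def
  have ha_ne : a ≠ 0 := ne_of_gt hω
  have ha_conj : starRingEnd ℂ a = a := hherm ω ω
  have hq_conj : starRingEnd ℂ (h α ω) = h ω α := hherm α ω
  set c : ℂ := h α ω / a with hc_def
  set β : V := α - c • ω with hβ_def
  have hβω : h β ω = 0 := by
    simp only [hβ_def, map_sub, map_smul, LinearMap.sub_apply, LinearMap.smul_apply,
      smul_eq_mul, hc_def]
    field_simp
    simp [ha_def]
  have hωβ : h ω β = 0 := by rw [← hherm β ω, hβω, map_zero]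
  -- the fundamental identity
  have hid : h α ω * h ω α = h α α * a - h β β * a := by
    have hαβ : α = β + c • ω := by rw [hβ_def]; abel
    have h1 : h α α = h β β + c * starRingEnd ℂ c * a := by
      conv_lhs => rw [hαβ]
      simp only [map_add, map_smul, LinearMap.add_apply, LinearMap.smul_apply,
        map_smulₛₗ, smul_eq_mul, hβω, hωβ]
      ring
    have hcc : c * starRingEnd ℂ c * a * a = h α ω * h ω α := by
      rw [hc_def, map_div₀, hq_conj, ha_conj]
      field_simp
    linear_combination (-a) * h1 - hcc
  -- h β β ≤ 0, and it is 0 iff β = 0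
  have hββ_conj : starRingEnd ℂ (h β β) = h β β := hherm β β
  have hββ_le : h β β ≤ 0 := by
    by_cases hb : β = 0
    · simp [hb]
    · by_contra hle
      have hlt : ¬ h β β < 0 := by
        intro hlt
        exact hle (le_of_lt hlt)
      exact hb (key h hherm hsig ω hω β (real_not_neg_nonneg hββ_conj hlt) hβω)
  constructor
  · rw [hid]
    have h0 : 0 ≤ -(h β β) * a := mul_nonneg (neg_nonneg.mpr hββ_le) (le_of_lt hω)
    have h2 := add_le_add_left h0 (h α α * a)
    simpa [sub_eq_add_neg, neg_mul] using h2
  · constructor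
    · intro heq
      have h3 : h β β * a = 0 := by linear_combination hid - heq
      have hββ0 : h β β = 0 := by
        rcases mul_eq_zero.mp h3 with h4 | h4
        · exact h4
        · exact absurd h4 ha_ne
      have hβ0 : β = 0 := key h hherm hsig ω hω β (le_of_eq hββ0.symm) hβω
      have h5 : α - c • ω = 0 := by rw [← hβ_def]; exact hβ0
      exact ⟨c, (sub_eq_zero.mp h5)⟩
    · rintro ⟨c', rfl⟩
      simp only [map_smul, map_smulₛₗ, LinearMap.smul_apply, smul_eq_mul]
      ring
end

section
/- Under the star-algebra setup, α · α* · Ω = |λ|² · ω^{2p} · Ω + Σ_{i=1}^p α_i · (α_i)* · ω^{2(p−i)} · Ω, where |λ|² = λ·conj(λ). -/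
/-- In a commutative star `ℂ`-algebra `A` with `ω* = ω`, `Ω* = Ω`, primitive
elements `a i` (`1 ≤ i ≤ p`) satisfying `a i * ω ^ (2(p−i)+1) * Ω = 0`, and
`α = λ • ω^p + ∑ a i * ω^(p−i)`, one has
`α * α* * Ω = |λ|² • (ω^(2p) * Ω) + ∑ a i * (a i)* * ω^(2(p−i)) * Ω`. -/
theorem stmt6 {A : Type*} [CommRing A] [Algebra ℂ A] [StarRing A] [StarModule ℂ A]
    (p : ℕ) (hp : 1 ≤ p) (ω Ω : A) (hω : star ω = ω) (hΩ : star Ω = Ω)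
    (l : ℂ) (a : ℕ → A)
    (hprim : ∀ i ∈ Finset.Icc 1 p, a i * ω ^ (2 * (p - i) + 1) * Ω = 0)
    (α : A) (hα : α = l • ω ^ p + ∑ i ∈ Finset.Icc 1 p, a i * ω ^ (p - i)) :
    α * star α * Ω = (l * (starRingEnd ℂ) l) • (ω ^ (2 * p) * Ω) +
      ∑ i ∈ Finset.Icc 1 p, a i * star (a i) * ω ^ (2 * (p - i)) * Ω := by
  -- starred primitivity
  have hprim' : ∀ j ∈ Finset.Icc 1 p, star (a j) * ω ^ (2 * (p - j) + 1) * Ω = 0 := by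
    intro j hj
    have h1 : star (a j * ω ^ (2 * (p - j) + 1) * Ω) = star (a j) * ω ^ (2 * (p - j) + 1) * Ω := by
      simp only [star_mul, star_pow, hω, hΩ]; ring
    rw [hprim j hj, star_zero] at h1
    exact h1.symm
  subst hα
  -- star of α
  have hstar : star (l • ω ^ p + ∑ i ∈ Finset.Icc 1 p, a i * ω ^ (p - i)) = (starRingEnd ℂ l) • ω ^ p +
      ∑ i ∈ Finset.Icc 1 p, star (a i) * ω ^ (p - i) := by
    simp only [star_add, star_smul, star_sum, star_mul, star_pow, hω, starRingEnd_apply]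
    congr 1
    exact Finset.sum_congr rfl fun i _ => mul_comm _ _
  rw [hstar]
  -- cross terms vanish
  have c1 : (ω ^ p) * (∑ i ∈ Finset.Icc 1 p, star (a i) * ω ^ (p - i)) * Ω = 0 := by
    rw [Finset.mul_sum, Finset.sum_mul]
    apply Finset.sum_eq_zero
    intro i hi
    have hi' := Finset.mem_Icc.mp hi
    have e : ω ^ p * ω ^ (p - i) = ω ^ (2 * (p - i) + 1) * ω ^ (i - 1) := by
      rw [← pow_add, ← pow_add]; congr 1; omega
    have hpow : ω ^ p * (star (a i) * ω ^ (p - i)) * Ω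
        = star (a i) * ω ^ (2 * (p - i) + 1) * Ω * ω ^ (i - 1) := by
      linear_combination (star (a i) * Ω) * e
    rw [hpow, hprim' i hi, zero_mul]
  have c2 : (∑ i ∈ Finset.Icc 1 p, a i * ω ^ (p - i)) * (ω ^ p) * Ω = 0 := by
    rw [Finset.sum_mul, Finset.sum_mul]
    apply Finset.sum_eq_zero
    intro i hi
    have hi' := Finset.mem_Icc.mp hi
    have e : ω ^ (p - i) * ω ^ p = ω ^ (2 * (p - i) + 1) * ω ^ (i - 1) := by
      rw [← pow_add, ← pow_add]; congr 1; omega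
    have hpow : a i * ω ^ (p - i) * ω ^ p * Ω
        = a i * ω ^ (2 * (p - i) + 1) * Ω * ω ^ (i - 1) := by
      linear_combination (a i * Ω) * e
    rw [hpow, hprim i hi, zero_mul]
  -- main sum
  have main : (∑ i ∈ Finset.Icc 1 p, a i * ω ^ (p - i)) *
      (∑ j ∈ Finset.Icc 1 p, star (a j) * ω ^ (p - j)) * Ω
      = ∑ i ∈ Finset.Icc 1 p, a i * star (a i) * ω ^ (2 * (p - i)) * Ω := by
    rw [Finset.sum_mul_sum, Finset.sum_mul]
    apply Finset.sum_congr rfl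
    intro i hi
    rw [Finset.sum_mul]
    have hz : ∀ j ∈ Finset.Icc 1 p, j ≠ i →
        a i * ω ^ (p - i) * (star (a j) * ω ^ (p - j)) * Ω = 0 := by
      intro j hj hji
      have hi' := Finset.mem_Icc.mp hi
      have hj' := Finset.mem_Icc.mp hj
      rcases lt_or_gt_of_ne hji with h | h
      · -- j < i : use hprim i
        have e : ω ^ (p - i) * ω ^ (p - j) = ω ^ (2 * (p - i) + 1) * ω ^ (i - j - 1) := by
          rw [← pow_add, ← pow_add]; congr 1; omega
        have hpow : a i * ω ^ (p - i) * (star (a j) * ω ^ (p - j)) * Ω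
            = a i * ω ^ (2 * (p - i) + 1) * Ω * (star (a j) * ω ^ (i - j - 1)) := by
          linear_combination (a i * star (a j) * Ω) * e
        rw [hpow, hprim i hi, zero_mul]
      · -- i < j : use hprim' j
        have e : ω ^ (p - i) * ω ^ (p - j) = ω ^ (2 * (p - j) + 1) * ω ^ (j - i - 1) := by
          rw [← pow_add, ← pow_add]; congr 1; omega
        have hpow : a i * ω ^ (p - i) * (star (a j) * ω ^ (p - j)) * Ω
            = star (a j) * ω ^ (2 * (p - j) + 1) * Ω * (a i * ω ^ (j - i - 1)) := by
          linear_combination (a i * star (a j) * Ω) * e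
        rw [hpow, hprim' j hj, zero_mul]
    rw [Finset.sum_eq_single_of_mem i hi hz,
      show 2 * (p - i) = (p - i) + (p - i) by ring, pow_add]
    ring
  have expand : (l • ω ^ p + ∑ i ∈ Finset.Icc 1 p, a i * ω ^ (p - i)) *
      ((starRingEnd ℂ l) • ω ^ p + ∑ i ∈ Finset.Icc 1 p, star (a i) * ω ^ (p - i)) * Ω
      = (l * starRingEnd ℂ l) • (ω ^ p * ω ^ p * Ω)
        + l • (ω ^ p * (∑ i ∈ Finset.Icc 1 p, star (a i) * ω ^ (p - i)) * Ω)
        + (starRingEnd ℂ l) • ((∑ i ∈ Finset.Icc 1 p, a i * ω ^ (p - i)) * ω ^ p * Ω)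
        + (∑ i ∈ Finset.Icc 1 p, a i * ω ^ (p - i)) *
          (∑ j ∈ Finset.Icc 1 p, star (a j) * ω ^ (p - j)) * Ω := by
    simp only [add_mul, mul_add, smul_mul_assoc, mul_smul_comm, smul_smul, smul_add,
      mul_comm ((starRingEnd ℂ) l) l]
    abel
  rw [expand, c1, c2, main, smul_zero, smul_zero, add_zero, add_zero,
    show 2 * p = p + p by ring, pow_add]
end

section
/- Under the star-algebra setup with an integration functional I, one has the identity I(α·α*·Ω)·I(ω^{2p}·Ω) − I(α·ω^p·Ω)·I(α*·ω^p·Ω) = I(ω^{2p}·Ω) · Σ_{i=1}^p I(α_i·(α_i)*·ω^{2(p−i)}·Ω). -/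
/-- In a commutative star `ℂ`-algebra `A` with `ω* = ω`, `Ω* = Ω`, primitive
elements `a i` (`1 ≤ i ≤ p`), `α = λ • ω^p + ∑ a i * ω^(p−i)` and an integration functional
`I : A →ₗ[ℂ] ℂ` with `I(x*) = conj (I x)`, one has the key identity
`I(α α* Ω) I(ω^{2p} Ω) − I(α ω^p Ω) I(α* ω^p Ω) = I(ω^{2p} Ω) ∑ᵢ I(aᵢ aᵢ* ω^{2(p−i)} Ω)`. -/
theorem stmt7 {A : Type*} [CommRing A] [Algebra ℂ A] [StarRing A] [StarModule ℂ A]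
    (p : ℕ) (hp : 1 ≤ p) (ω Ω : A) (hω : star ω = ω) (hΩ : star Ω = Ω)
    (l : ℂ) (a : ℕ → A)
    (hprim : ∀ i ∈ Finset.Icc 1 p, a i * ω ^ (2 * (p - i) + 1) * Ω = 0)
    (α : A) (hα : α = l • ω ^ p + ∑ i ∈ Finset.Icc 1 p, a i * ω ^ (p - i))
    (I : A →ₗ[ℂ] ℂ) (hI : ∀ x : A, I (star x) = starRingEnd ℂ (I x)) :
    I (α * star α * Ω) * I (ω ^ (2 * p) * Ω) -
      I (α * ω ^ p * Ω) * I (star α * ω ^ p * Ω) =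
    I (ω ^ (2 * p) * Ω) *
      ∑ i ∈ Finset.Icc 1 p, I (a i * star (a i) * ω ^ (2 * (p - i)) * Ω) := by
  -- key vanishing lemma
  have key : ∀ i ∈ Finset.Icc 1 p, ∀ k, 2 * (p - i) + 1 ≤ k → a i * ω ^ k * Ω = 0 := by
    intro i hi k hk
    obtain ⟨m, rfl⟩ := Nat.exists_eq_add_of_le hk
    calc a i * ω ^ (2 * (p - i) + 1 + m) * Ω
        = (a i * ω ^ (2 * (p - i) + 1) * Ω) * ω ^ m := by rw [pow_add]; ring
      _ = 0 := by rw [hprim i hi, zero_mul]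
  have keys : ∀ i ∈ Finset.Icc 1 p, ∀ k, 2 * (p - i) + 1 ≤ k →
      star (a i) * ω ^ k * Ω = 0 := by
    intro i hi k hk
    have h := congrArg star (key i hi k hk)
    simpa [star_mul, star_pow, hω, hΩ, mul_comm, mul_left_comm, mul_assoc] using h
  have hsα : star α = (starRingEnd ℂ l) • ω ^ p +
      ∑ i ∈ Finset.Icc 1 p, star (a i) * ω ^ (p - i) := by
    rw [hα, star_add, star_smul, star_pow, hω, star_sum]
    simp only [starRingEnd_apply]
    congr 1
    refine Finset.sum_congr rfl fun i _ => ?_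
    rw [star_mul, star_pow, hω, mul_comm]
  have h1 : α * ω ^ p * Ω = l • (ω ^ (2 * p) * Ω) := by
    rw [hα, add_mul, add_mul, Finset.sum_mul, Finset.sum_mul]
    have hz : ∑ i ∈ Finset.Icc 1 p, a i * ω ^ (p - i) * ω ^ p * Ω = 0 := by
      refine Finset.sum_eq_zero fun i hi => ?_
      simp only [Finset.mem_Icc] at hi
      have := key i (Finset.mem_Icc.mpr hi) (p - i + p) (by omega)
      calc a i * ω ^ (p - i) * ω ^ p * Ω = a i * ω ^ (p - i + p) * Ω := by
            rw [pow_add]; ring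
        _ = 0 := this
    rw [hz, add_zero, smul_mul_assoc, smul_mul_assoc, ← pow_add, two_mul]
  have h2 : star α * ω ^ p * Ω = (starRingEnd ℂ l) • (ω ^ (2 * p) * Ω) := by
    rw [hsα, add_mul, add_mul, Finset.sum_mul, Finset.sum_mul]
    have hz : ∑ i ∈ Finset.Icc 1 p, star (a i) * ω ^ (p - i) * ω ^ p * Ω = 0 := by
      refine Finset.sum_eq_zero fun i hi => ?_
      simp only [Finset.mem_Icc] at hi
      have := keys i (Finset.mem_Icc.mpr hi) (p - i + p) (by omega)
      calc star (a i) * ω ^ (p - i) * ω ^ p * Ω = star (a i) * ω ^ (p - i + p) * Ω := by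
            rw [pow_add]; ring
        _ = 0 := this
    rw [hz, add_zero, smul_mul_assoc, smul_mul_assoc, ← pow_add, two_mul]
  have h3 : α * star α * Ω = (l * starRingEnd ℂ l) • (ω ^ (2 * p) * Ω) +
      ∑ i ∈ Finset.Icc 1 p, a i * star (a i) * ω ^ (2 * (p - i)) * Ω := by
    rw [hsα, hα]
    have expand : ∀ x s y t : A, (x + s) * (y + t) * Ω =
        x * y * Ω + x * t * Ω + (s * y * Ω + s * t * Ω) := by intros; ring
    rw [expand]
    have t1 : (l • ω ^ p) * ((starRingEnd ℂ l) • ω ^ p) * Ω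
        = (l * starRingEnd ℂ l) • (ω ^ (2 * p) * Ω) := by
      rw [smul_mul_smul_comm, smul_mul_assoc, ← pow_add, two_mul]
    have t2 : (l • ω ^ p) * (∑ i ∈ Finset.Icc 1 p, star (a i) * ω ^ (p - i)) * Ω = 0 := by
      rw [smul_mul_assoc, smul_mul_assoc, Finset.mul_sum, Finset.sum_mul]
      rw [Finset.sum_eq_zero, smul_zero]
      intro i hi
      simp only [Finset.mem_Icc] at hi
      have := keys i (Finset.mem_Icc.mpr hi) (p + (p - i)) (by omega)
      calc ω ^ p * (star (a i) * ω ^ (p - i)) * Ω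
          = star (a i) * ω ^ (p + (p - i)) * Ω := by rw [pow_add]; ring
        _ = 0 := this
    have t3 : (∑ i ∈ Finset.Icc 1 p, a i * ω ^ (p - i)) * ((starRingEnd ℂ l) • ω ^ p) * Ω
        = 0 := by
      rw [mul_smul_comm, smul_mul_assoc, Finset.sum_mul, Finset.sum_mul]
      rw [Finset.sum_eq_zero, smul_zero]
      intro i hi
      simp only [Finset.mem_Icc] at hi
      have := key i (Finset.mem_Icc.mpr hi) (p - i + p) (by omega)
      calc a i * ω ^ (p - i) * ω ^ p * Ω = a i * ω ^ (p - i + p) * Ω := by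
            rw [pow_add]; ring
        _ = 0 := this
    have t4 : (∑ i ∈ Finset.Icc 1 p, a i * ω ^ (p - i)) *
        (∑ j ∈ Finset.Icc 1 p, star (a j) * ω ^ (p - j)) * Ω
        = ∑ i ∈ Finset.Icc 1 p, a i * star (a i) * ω ^ (2 * (p - i)) * Ω := by
      rw [Finset.sum_mul_sum, Finset.sum_mul]
      refine Finset.sum_congr rfl fun i hi => ?_
      rw [Finset.sum_mul]
      rw [Finset.sum_eq_single i]
      · simp only [Finset.mem_Icc] at hi
        have : 2 * (p - i) = (p - i) + (p - i) := by omega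
        rw [this, pow_add]; ring
      · intro j hj hne
        simp only [Finset.mem_Icc] at hi hj
        rcases lt_or_gt_of_ne hne with hlt | hgt
        · -- j < i : use key on i
          have := key i (Finset.mem_Icc.mpr hi) ((p - i) + (p - j)) (by omega)
          calc a i * ω ^ (p - i) * (star (a j) * ω ^ (p - j)) * Ω
              = (a i * ω ^ ((p - i) + (p - j)) * Ω) * star (a j) := by rw [pow_add]; ring
            _ = 0 := by rw [this, zero_mul]
        · -- i < j : use keys on j
          have := keys j (Finset.mem_Icc.mpr hj) ((p - i) + (p - j)) (by omega)
          calc a i * ω ^ (p - i) * (star (a j) * ω ^ (p - j)) * Ω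
              = (star (a j) * ω ^ ((p - i) + (p - j)) * Ω) * a i := by rw [pow_add]; ring
            _ = 0 := by rw [this, zero_mul]
      · intro h; exact absurd hi h
    rw [t1, t2, t3, t4, add_zero, zero_add]

  rw [h1, h2, h3, map_add, map_smul, map_smul, map_smul, map_sum]
  simp only [smul_eq_mul]
  ring
end
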